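/- Theorem 1(ii) (characterization of the angle criterion): Suppose β* ∈ (0,1) satisfies Φ(β*) = ε. Then for every β ∈ [0,1], the angle criterion −⟪g, d(β)⟫ ≥ ε ‖g‖ ‖d(β)‖ holds if and only if β ≤ β*. -/

import Mathlib

open scoped RealInnerProductSpace

noncomputable def dvec {n : ℕ} (g d : EuclideanSpace ℝ (Fin n)) (ξ β : ℝ) :
    EuclideanSpace ℝ (Fin n) :=
  β • d - ((1 - β) * ξ) • g

noncomputable def Phi {n : ℕ} (g d : EuclideanSpace ℝ (Fin n)) (ξ β : ℝ) : ℝ :=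
  -⟪g, dvec g d ξ β⟫ / (‖g‖ * ‖dvec g d ξ β‖)

/-- Pure real-algebra core: strict monotonicity of `β ↦ N β / D β`. -/
lemma aux_mono (p q K ξ β₁ β₂ N₁ N₂ D₁ D₂ : ℝ) (hp : 0 < p) (hK : 0 < K)
    (hξ : 0 < ξ) (hβ₁ : 0 ≤ β₁) (h12 : β₁ < β₂)
    (hD₁ : 0 < D₁) (hD₂ : 0 < D₂)
    (hN₁ : N₁ = (1 - β₁) * ξ * p - β₁ * q) (hN₂ : N₂ = (1 - β₂) * ξ * p - β₂ * q)
    (h1 : p * D₁ ^ 2 = N₁ ^ 2 + β₁ ^ 2 * K) (h2 : p * D₂ ^ 2 = N₂ ^ 2 + β₂ ^ 2 * K) :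
    N₂ * D₁ < N₁ * D₂ := by
  have hβ₂ : 0 < β₂ := lt_of_le_of_lt hβ₁ h12
  have key : p * (N₁ ^ 2 * D₂ ^ 2 - N₂ ^ 2 * D₁ ^ 2)
      = K * ((N₁ * β₂) ^ 2 - (N₂ * β₁) ^ 2) := by
    linear_combination N₁ ^ 2 * h2 - N₂ ^ 2 * h1
  have hdiff : N₁ * β₂ - N₂ * β₁ = ξ * p * (β₂ - β₁) := by
    subst hN₁ hN₂; ring
  have key2 : N₁ ^ 2 * D₂ ^ 2 - N₂ ^ 2 * D₁ ^ 2
      = K * ξ * (β₂ - β₁) * (N₁ * β₂ + N₂ * β₁) := by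
    apply mul_left_cancel₀ hp.ne'
    calc p * (N₁ ^ 2 * D₂ ^ 2 - N₂ ^ 2 * D₁ ^ 2)
        = K * ((N₁ * β₂ - N₂ * β₁) * (N₁ * β₂ + N₂ * β₁)) := by rw [key]; ring
      _ = K * (ξ * p * (β₂ - β₁) * (N₁ * β₂ + N₂ * β₁)) := by rw [hdiff]
      _ = p * (K * ξ * (β₂ - β₁) * (N₁ * β₂ + N₂ * β₁)) := by ring
  have hgap : 0 < K * ξ * (β₂ - β₁) :=
    mul_pos (mul_pos hK hξ) (sub_pos.mpr h12)
  rcases le_or_gt N₁ 0 with hN1le | hN1pos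
  · -- then β₁ > 0, N₂ < 0, S < 0
    have hβ₁pos : 0 < β₁ := by
      rcases hβ₁.eq_or_lt with h | h
      · exfalso; rw [← h] at hN₁; rw [hN₁] at hN1le
        nlinarith [mul_pos hξ hp]
      · exact h
    have hN2neg : N₂ < 0 := by
      nlinarith [mul_nonneg hβ₂.le (by nlinarith : (0:ℝ) ≤ β₁ * q - (1 - β₁) * ξ * p),
        mul_pos (mul_pos hξ hp) (sub_pos.mpr h12), hβ₁pos]
    have hS : N₁ * β₂ + N₂ * β₁ < 0 := by
      have h1' : N₁ * β₂ ≤ 0 := mul_nonpos_of_nonpos_of_nonneg hN1le hβ₂.le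
      have h2' : N₂ * β₁ < 0 := mul_neg_of_neg_of_pos hN2neg hβ₁pos
      linarith
    have hsq : N₁ ^ 2 * D₂ ^ 2 < N₂ ^ 2 * D₁ ^ 2 := by
      have hpos : K * ξ * (β₂ - β₁) * (N₁ * β₂ + N₂ * β₁) < 0 :=
        mul_neg_of_pos_of_neg hgap hS
      rw [← key2] at hpos; linarith
    have hx : 0 < -(N₂ * D₁) := by
      rw [neg_pos]; exact mul_neg_of_neg_of_pos hN2neg hD₁
    have hsq' : (-(N₁ * D₂)) ^ 2 < (-(N₂ * D₁)) ^ 2 := by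
      rw [neg_sq, neg_sq, mul_pow, mul_pow]; exact hsq
    have := lt_of_pow_lt_pow_left₀ 2 hx.le hsq'
    linarith
  · rcases le_or_gt N₂ 0 with hN2le | hN2pos
    · have h1' : N₂ * D₁ ≤ 0 := mul_nonpos_of_nonpos_of_nonneg hN2le hD₁.le
      have h2' : 0 < N₁ * D₂ := mul_pos hN1pos hD₂
      linarith
    · have hS : 0 < N₁ * β₂ + N₂ * β₁ := by
        have h1' : 0 < N₁ * β₂ := mul_pos hN1pos hβ₂
        have h2' : 0 ≤ N₂ * β₁ := mul_nonneg hN2pos.le hβ₁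
        linarith
      have hsq : N₂ ^ 2 * D₁ ^ 2 < N₁ ^ 2 * D₂ ^ 2 := by
        have hpos : 0 < K * ξ * (β₂ - β₁) * (N₁ * β₂ + N₂ * β₁) :=
          mul_pos hgap hS
        rw [← key2] at hpos; linarith
      have hx : 0 < N₁ * D₂ := mul_pos hN1pos hD₂
      have hsq' : (N₂ * D₁) ^ 2 < (N₁ * D₂) ^ 2 := by
        rw [mul_pow, mul_pow]; exact hsq
      exact lt_of_pow_lt_pow_left₀ 2 hx.le hsq'

/-- Theorem 1(ii): if Φ(βs) = ε with βs ∈ (0,1), then for every β ∈ [0,1] the angle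
criterion −⟪g, d(β)⟫ ≥ ε ‖g‖ ‖d(β)‖ holds if and only if β ≤ βs. -/
theorem angle_criterion_iff_le_critical {n : ℕ} (g d : EuclideanSpace ℝ (Fin n))
    (hind : LinearIndependent ℝ ![g, d]) (ε ξ : ℝ)
    (hε : ε ∈ Set.Ioo (0 : ℝ) 1) (hξ : 0 < ξ)
    (hviol : -⟪g, d⟫ < ε * ‖g‖ * ‖d‖)
    (βs : ℝ) (hβs : βs ∈ Set.Ioo (0 : ℝ) 1) (hPhi : Phi g d ξ βs = ε) :
    ∀ β ∈ Set.Icc (0 : ℝ) 1,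
      (-⟪g, dvec g d ξ β⟫ ≥ ε * ‖g‖ * ‖dvec g d ξ β‖ ↔ β ≤ βs) := by
  have hg : g ≠ 0 := hind.ne_zero 0
  have hgpos : 0 < ‖g‖ := norm_pos_iff.mpr hg
  have hp : (0:ℝ) < ‖g‖ ^ 2 := by positivity
  -- strict Cauchy-Schwarz via Gram determinant
  have hK : (0:ℝ) < ‖g‖ ^ 2 * ‖d‖ ^ 2 - ⟪g, d⟫ ^ 2 := by
    have hw : (‖g‖ ^ 2) • d - ⟪g, d⟫ • g ≠ 0 := by
      intro h
      have h0 : (-⟪g, d⟫) • g + (‖g‖ ^ 2) • d = 0 := by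
        rw [sub_eq_zero] at h
        rw [neg_smul, ← h]; abel
      have := (LinearIndependent.pair_iff.mp hind) _ _ h0
      exact hp.ne' this.2
    have hw2 : (0:ℝ) < ‖(‖g‖ ^ 2) • d - ⟪g, d⟫ • g‖ ^ 2 :=
      pow_pos (norm_pos_iff.mpr hw) 2
    have hexp : ‖(‖g‖ ^ 2) • d - ⟪g, d⟫ • g‖ ^ 2
        = ‖g‖ ^ 2 * (‖g‖ ^ 2 * ‖d‖ ^ 2 - ⟪g, d⟫ ^ 2) := by
      rw [← real_inner_self_eq_norm_sq]
      simp only [inner_sub_left, inner_sub_right, real_inner_smul_left,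
        real_inner_smul_right, real_inner_self_eq_norm_sq, real_inner_comm d g,
        norm_smul, Real.norm_eq_abs, mul_pow, sq_abs]
      ring
    nlinarith
  -- inner product formula
  have hinner : ∀ β : ℝ, -⟪g, dvec g d ξ β⟫ = (1 - β) * ξ * ‖g‖ ^ 2 - β * ⟪g, d⟫ := by
    intro β
    rw [dvec, inner_sub_right, real_inner_smul_right, real_inner_smul_right,
      real_inner_self_eq_norm_sq]
    ring
  -- norm-squared formula
  have hD2 : ∀ β : ℝ, ‖g‖ ^ 2 * ‖dvec g d ξ β‖ ^ 2
      = ((1 - β) * ξ * ‖g‖ ^ 2 - β * ⟪g, d⟫) ^ 2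
        + β ^ 2 * (‖g‖ ^ 2 * ‖d‖ ^ 2 - ⟪g, d⟫ ^ 2) := by
    intro β
    have : ‖dvec g d ξ β‖ ^ 2
        = β ^ 2 * ‖d‖ ^ 2 - 2 * β * ((1 - β) * ξ) * ⟪g, d⟫
          + ((1 - β) * ξ) ^ 2 * ‖g‖ ^ 2 := by
      rw [← real_inner_self_eq_norm_sq, dvec]
      simp only [inner_sub_left, inner_sub_right, real_inner_smul_left,
        real_inner_smul_right, real_inner_self_eq_norm_sq, real_inner_comm d g,
        norm_smul, Real.norm_eq_abs, mul_pow, sq_abs]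
      ring
    rw [this]; ring
  -- dvec nonzero on [0,1]
  have hDpos : ∀ β ∈ Set.Icc (0:ℝ) 1, 0 < ‖dvec g d ξ β‖ := by
    intro β hβ
    rw [norm_pos_iff]
    intro h
    have h0 : (-((1 - β) * ξ)) • g + β • d = 0 := by
      rw [dvec, sub_eq_zero] at h
      rw [neg_smul, ← h]; abel
    have := (LinearIndependent.pair_iff.mp hind) (-((1 - β) * ξ)) β h0
    have hβ1 : β = 1 := by
      have h1 : (1 - β) * ξ = 0 := by
        have := this.1; linarith [neg_eq_zero.mp this]
      rcases mul_eq_zero.mp h1 with h | h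
      · linarith
      · exact absurd h hξ.ne'
    rw [hβ1] at this
    exact one_ne_zero this.2
  -- monotonicity
  have mono : ∀ β₁ β₂, 0 ≤ β₁ → β₁ < β₂ → β₂ ≤ 1 →
      ((1 - β₂) * ξ * ‖g‖ ^ 2 - β₂ * ⟪g, d⟫) * ‖dvec g d ξ β₁‖
        < ((1 - β₁) * ξ * ‖g‖ ^ 2 - β₁ * ⟪g, d⟫) * ‖dvec g d ξ β₂‖ := by
    intro β₁ β₂ h0 h12 h1
    exact aux_mono (‖g‖ ^ 2) ⟪g, d⟫ _ ξ β₁ β₂ _ _ _ _ hp hK hξ h0 h12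
      (hDpos β₁ ⟨h0, le_of_lt (lt_of_lt_of_le h12 h1)⟩)
      (hDpos β₂ ⟨le_of_lt (lt_of_le_of_lt h0 h12), h1⟩)
      rfl rfl (hD2 β₁) (hD2 β₂)
  have hDs : 0 < ‖dvec g d ξ βs‖ := hDpos βs ⟨hβs.1.le, hβs.2.le⟩
  -- from hPhi
  have hNs : (1 - βs) * ξ * ‖g‖ ^ 2 - βs * ⟪g, d⟫ = ε * ‖g‖ * ‖dvec g d ξ βs‖ := by
    have h' := hPhi
    rw [Phi, div_eq_iff (by positivity : ‖g‖ * ‖dvec g d ξ βs‖ ≠ 0)] at h'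
    rw [← hinner βs, h']; ring
  intro β hβ
  have hDb : 0 < ‖dvec g d ξ β‖ := hDpos β hβ
  rw [hinner β]
  constructor
  · intro hge
    by_contra hlt
    push_neg at hlt
    have hm := mono βs β hβs.1.le hlt hβ.2
    rw [hNs] at hm
    have h2 : ((1 - β) * ξ * ‖g‖ ^ 2 - β * ⟪g, d⟫) * ‖dvec g d ξ βs‖
        < (ε * ‖g‖ * ‖dvec g d ξ β‖) * ‖dvec g d ξ βs‖ := by
      calc ((1 - β) * ξ * ‖g‖ ^ 2 - β * ⟪g, d⟫) * ‖dvec g d ξ βs‖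
          < ε * ‖g‖ * ‖dvec g d ξ βs‖ * ‖dvec g d ξ β‖ := hm
        _ = (ε * ‖g‖ * ‖dvec g d ξ β‖) * ‖dvec g d ξ βs‖ := by ring
    have := (mul_lt_mul_iff_of_pos_right hDs).mp h2
    linarith
  · intro hle
    rcases eq_or_lt_of_le hle with heq | hlt
    · rw [heq, hNs]
    · have hm := mono β βs hβ.1 hlt hβs.2.le
      rw [hNs] at hm
      have h2 : (ε * ‖g‖ * ‖dvec g d ξ β‖) * ‖dvec g d ξ βs‖
          < ((1 - β) * ξ * ‖g‖ ^ 2 - β * ⟪g, d⟫) * ‖dvec g d ξ βs‖ := by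
        calc (ε * ‖g‖ * ‖dvec g d ξ β‖) * ‖dvec g d ξ βs‖
            = ε * ‖g‖ * ‖dvec g d ξ βs‖ * ‖dvec g d ξ β‖ := by ring
          _ < _ := hm
      have := (mul_lt_mul_iff_of_pos_right hDs).mp h2
      linarith
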